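/- Key invariance lemma for temporary control: for a control C = (O, I) and an attractor A_t of the original network, the set W = strongBasin(A_t) ∩ S|_C is forward-invariant under the controlled dynamics: if s ∈ W and stepC s s', then s' ∈ W. Hence once the controlled network enters W, it remains in W, so releasing the temporary control at any later time yields a state in strongBasin(A_t). -/
import Mathlib


def step {n : ℕ} (f : Fin n → (Fin n → Bool) → Bool) (s s' : Fin n → Bool) : Prop :=
  ∃ i : Fin n, s' = Function.update s i (f i s)

def reach {n : ℕ} (f : Fin n → (Fin n → Bool) → Bool) (s : Fin n → Bool) :
    Set (Fin n → Bool) :=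
  {s' | Relation.ReflTransGen (step f) s s'}

def IsAttractor {n : ℕ} (f : Fin n → (Fin n → Bool) → Bool)
    (A : Set (Fin n → Bool)) : Prop :=
  A.Nonempty ∧ ∀ s ∈ A, reach f s = A

def weakBasin {n : ℕ} (f : Fin n → (Fin n → Bool) → Bool)
    (A : Set (Fin n → Bool)) : Set (Fin n → Bool) :=
  {s | (reach f s ∩ A).Nonempty}

def strongBasin {n : ℕ} (f : Fin n → (Fin n → Bool) → Bool)
    (A : Set (Fin n → Bool)) : Set (Fin n → Bool) :=
  {s | (reach f s ∩ A).Nonempty ∧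
    ∀ A', IsAttractor f A' → A' ≠ A → reach f s ∩ A' = ∅}

def controlledF {n : ℕ} (O I : Finset (Fin n)) (f : Fin n → (Fin n → Bool) → Bool)
    (i : Fin n) (s : Fin n → Bool) : Bool :=
  if i ∈ O then false else if i ∈ I then true else f i s

def applyControl {n : ℕ} (O I : Finset (Fin n)) (s : Fin n → Bool) :
    Fin n → Bool :=
  fun i => if i ∈ O then false else if i ∈ I then true else s i

def controlledSpace {n : ℕ} (O I : Finset (Fin n)) : Set (Fin n → Bool) :=
  {s | (∀ i ∈ O, s i = false) ∧ (∀ i ∈ I, s i = true)}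

lemma reach_mono {n : ℕ} (f : Fin n → (Fin n → Bool) → Bool) {s s' : Fin n → Bool}
    (h : step f s s') : reach f s' ⊆ reach f s := by
  intro u hu
  exact Relation.ReflTransGen.head h hu

lemma reach_trans {n : ℕ} (f : Fin n → (Fin n → Bool) → Bool) {s t u : Fin n → Bool}
    (h1 : t ∈ reach f s) (h2 : u ∈ reach f t) : u ∈ reach f s :=
  Relation.ReflTransGen.trans h1 h2

lemma exists_attractor {n : ℕ} (f : Fin n → (Fin n → Bool) → Bool) (s : Fin n → Bool) :
    ∃ A, IsAttractor f A ∧ (reach f s ∩ A).Nonempty := by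
  classical
  -- pick t in reach f s minimizing card of (reach f t).toFinset
  have hs : s ∈ (reach f s).toFinset := by
    rw [Set.mem_toFinset]; exact Relation.ReflTransGen.refl
  obtain ⟨t, ht, hmin⟩ := Finset.exists_min_image (reach f s).toFinset
    (fun t => (reach f t).toFinset.card) ⟨s, hs⟩
  rw [Set.mem_toFinset] at ht
  refine ⟨reach f t, ⟨⟨t, Relation.ReflTransGen.refl⟩, ?_⟩, ⟨t, reach_trans f ht Relation.ReflTransGen.refl, Relation.ReflTransGen.refl⟩⟩
  intro u hu
  have hsub : reach f u ⊆ reach f t := fun v hv => reach_trans f hu hv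
  have husr : u ∈ (reach f s).toFinset := by
    rw [Set.mem_toFinset]; exact reach_trans f ht hu
  have hcard := hmin u husr
  have hfsub : (reach f u).toFinset ⊆ (reach f t).toFinset := by
    intro v hv; rw [Set.mem_toFinset] at *; exact hsub hv
  have := Finset.eq_of_subset_of_card_le hfsub hcard
  apply Set.toFinset_inj.mp this

theorem temp_control_invariance {n : ℕ} (f : Fin n → (Fin n → Bool) → Bool)
    (O I : Finset (Fin n)) (hdisj : Disjoint O I)
    (At : Set (Fin n → Bool)) (hAt : IsAttractor f At)
    (s s' : Fin n → Bool)
    (hs : s ∈ strongBasin f At ∩ controlledSpace O I)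
    (hstep : step (controlledF O I f) s s') :
    s' ∈ strongBasin f At ∩ controlledSpace O I := by
  classical
  obtain ⟨⟨hwb, hsb⟩, hO, hI⟩ := hs
  obtain ⟨i, hi⟩ := hstep
  by_cases hiO : i ∈ O
  · have hval : controlledF O I f i s = s i := by simp [controlledF, hiO, hO i hiO]
    have heq : s' = s := by rw [hi, hval, Function.update_eq_self]
    rw [heq]
    exact ⟨⟨hwb, hsb⟩, hO, hI⟩
  · by_cases hiI : i ∈ I
    · have hval : controlledF O I f i s = s i := by simp [controlledF, hiO, hiI, hI i hiI]
      have heq : s' = s := by rw [hi, hval, Function.update_eq_self]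
      rw [heq]
      exact ⟨⟨hwb, hsb⟩, hO, hI⟩
    · have hval : controlledF O I f i s = f i s := by simp [controlledF, hiO, hiI]
      have hstepf : step f s s' := ⟨i, by rw [hi, hval]⟩
      have hsub : reach f s' ⊆ reach f s := reach_mono f hstepf
      constructor
      · constructor
        · obtain ⟨A, hA, ⟨a, haR, haA⟩⟩ := exists_attractor f s'
          by_cases hAeq : A = At
          · exact ⟨a, haR, hAeq ▸ haA⟩
          · exfalso
            have := hsb A hA hAeq
            exact Set.eq_empty_iff_forall_notMem.mp this a ⟨hsub haR, haA⟩
        · intro A' hA' hne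
          have := hsb A' hA' hne
          apply Set.eq_empty_iff_forall_notMem.mpr
          intro x ⟨hx1, hx2⟩
          exact Set.eq_empty_iff_forall_notMem.mp this x ⟨hsub hx1, hx2⟩
      · constructor
        · intro j hj
          have hji : j ≠ i := fun h => hiO (h ▸ hj)
          rw [hi, Function.update_of_ne hji]
          exact hO j hj
        · intro j hj
          have hji : j ≠ i := fun h => hiI (h ▸ hj)
          rw [hi, Function.update_of_ne hji]
          exact hI j hj
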